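/- (C-bound) Let ρ be a probability measure on a set H of voters with bounded measurable evaluations, and let P be a probability measure on X × {-1,+1} with X-marginal D. If the first moment of the ρ-margin μ₁ = ∫_{X×Y} y·(∫_H h(x) dρ(h)) dP(x,y) is strictly positive, then the risk of the ρ-weighted majority vote satisfies P[{(x,y) : y·∫_H h(x) dρ(h) ≤ 0}] ≤ 1 − μ₁² / μ₂, where μ₂ = ∫_{H×H} (∫_X h(x)h'(x) dD(x)) d(ρ⊗ρ)(h,h'). -/

import Mathlib

open MeasureTheory

/-- The C-bound: if the first moment of the ρ-margin is strictly positive, then the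
risk of the ρ-weighted majority vote is at most `1 - μ₁² / μ₂`. -/
theorem c_bound
    {X H : Type*} [MeasurableSpace X] [MeasurableSpace H]
    (P : Measure (X × ℝ)) [IsProbabilityMeasure P]
    (D : Measure X) (hD : P.map Prod.fst = D)
    (ρ : Measure H) [IsProbabilityMeasure ρ]
    (f : H → X → ℝ)
    (hmeas : Measurable (fun p : H × X => f p.1 p.2))
    (hbound : ∀ h x, |f h x| ≤ 1)
    (hY : ∀ᵐ p ∂P, p.2 = 1 ∨ p.2 = -1)
    (hpos : 0 < ∫ p, p.2 * ∫ h, f h p.1 ∂ρ ∂P) :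
    (P {p : X × ℝ | p.2 * ∫ h, f h p.1 ∂ρ ≤ 0}).toReal ≤
      1 - (∫ p, p.2 * ∫ h, f h p.1 ∂ρ ∂P) ^ 2 /
        (∫ q : H × H, (∫ x, f q.1 x * f q.2 x ∂D) ∂(ρ.prod ρ)) := by
  subst hD
  set g : X → ℝ := fun x => ∫ h, f h x ∂ρ with hg
  have hDprob : IsProbabilityMeasure (P.map Prod.fst) :=
    Measure.isProbabilityMeasure_map measurable_fst.aemeasurable
  -- measurability of g
  have hmg : StronglyMeasurable g :=
    (hmeas.comp measurable_swap).stronglyMeasurable.integral_prod_right'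
  have hgb : ∀ x, |g x| ≤ 1 := by
    intro x
    calc |g x| ≤ ∫ h, |f h x| ∂ρ := by
          simpa using norm_integral_le_integral_norm (fun h => f h x)
      _ ≤ ∫ _h, (1:ℝ) ∂ρ := by
          apply integral_mono_of_nonneg (Filter.Eventually.of_forall fun h => abs_nonneg _)
            (integrable_const 1) (Filter.Eventually.of_forall fun h => hbound h x)
      _ = 1 := by simp
  -- the margin
  set M : X × ℝ → ℝ := fun p => p.2 * g p.1 with hM
  have hmM : Measurable M := measurable_snd.mul (hmg.measurable.comp measurable_fst)
  have hMbd : ∀ᵐ p ∂P, ‖M p‖ ≤ 1 := by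
    filter_upwards [hY] with p hp
    have h2 : |p.2| = 1 := by rcases hp with h | h <;> simp [h]
    show |p.2 * g p.1| ≤ 1
    rw [abs_mul, h2, one_mul]
    exact hgb p.1
  have hMint : Integrable M P :=
    (integrable_const (1:ℝ)).mono' hmM.aestronglyMeasurable hMbd
  have hM2int : Integrable (fun p => M p ^ 2) P := by
    refine (integrable_const (1:ℝ)).mono' ((hmM.pow_const 2).aestronglyMeasurable) ?_
    filter_upwards [hMbd] with p hp
    rw [Real.norm_eq_abs, abs_pow]
    calc |M p| ^ 2 ≤ 1 ^ 2 := by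
          exact pow_le_pow_left₀ (abs_nonneg _) (by simpa using hp) 2
      _ = 1 := one_pow 2
  set μ1 : ℝ := ∫ p, M p ∂P with hμ1
  set μ2 : ℝ := ∫ p, M p ^ 2 ∂P with hμ2
  -- identify μ2 with the double integral
  have hFint : Integrable (fun z : (H × H) × X => f z.1.1 z.2 * f z.1.2 z.2)
      ((ρ.prod ρ).prod (P.map Prod.fst)) := by
    have hm : Measurable (fun z : (H × H) × X => f z.1.1 z.2 * f z.1.2 z.2) :=
      (hmeas.comp ((measurable_fst.comp measurable_fst).prodMk measurable_snd)).mul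
        (hmeas.comp ((measurable_snd.comp measurable_fst).prodMk measurable_snd))
    refine (integrable_const (1:ℝ)).mono' hm.aestronglyMeasurable ?_
    refine Filter.Eventually.of_forall fun z => ?_
    rw [Real.norm_eq_abs, abs_mul]
    calc |f z.1.1 z.2| * |f z.1.2 z.2| ≤ 1 * 1 :=
        mul_le_mul (hbound _ _) (hbound _ _) (abs_nonneg _) zero_le_one
      _ = 1 := one_mul 1
  have hμ2eq : (∫ q : H × H, (∫ x, f q.1 x * f q.2 x ∂(P.map Prod.fst)) ∂(ρ.prod ρ)) = μ2 := by
    have h1 : (∫ q : H × H, (∫ x, f q.1 x * f q.2 x ∂(P.map Prod.fst)) ∂(ρ.prod ρ))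
        = ∫ x, (∫ q : H × H, f q.1 x * f q.2 x ∂(ρ.prod ρ)) ∂(P.map Prod.fst) :=
      integral_integral_swap hFint
    have h2 : ∀ x, (∫ q : H × H, f q.1 x * f q.2 x ∂(ρ.prod ρ)) = g x ^ 2 := by
      intro x
      rw [integral_prod_mul (fun h => f h x) (fun h => f h x)]
      ring
    have h3 : (∫ x, g x ^ 2 ∂(P.map Prod.fst)) = ∫ p, g p.1 ^ 2 ∂P :=
      integral_map measurable_fst.aemeasurable
        ((hmg.pow 2).aestronglyMeasurable)
    have h4 : (∫ p, g p.1 ^ 2 ∂P) = μ2 := by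
      rw [hμ2]
      apply integral_congr_ae
      filter_upwards [hY] with p hp
      rcases hp with h | h <;> simp [hM, h, mul_pow]
    rw [h1]
    simp only [h2]
    rw [h3, h4]
  rw [hμ2eq]
  -- the event
  set A : Set (X × ℝ) := {p : X × ℝ | M p ≤ 0} with hA
  have hAm : MeasurableSet A := hmM measurableSet_Iic
  set r : ℝ := (P A).toReal with hr
  set q : ℝ := (P Aᶜ).toReal with hqdef
  have hqr : q = 1 - r := by
    rw [hqdef, hr, prob_compl_eq_one_sub hAm, ENNReal.toReal_sub_of_le
      (prob_le_one) (by simp)]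
    simp
  -- q > 0
  have hq0 : 0 < q := by
    rcases lt_or_eq_of_le (ENNReal.toReal_nonneg : (0:ℝ) ≤ q) with h | h
    · exact h
    · exfalso
      have hPAc : P Aᶜ = 0 := by
        have := (ENNReal.toReal_eq_zero_iff _).mp h.symm
        rcases this with h' | h'
        · exact h'
        · exact absurd h' (measure_ne_top P _)
      have hae : ∀ᵐ p ∂P, M p ≤ 0 :=
        ae_iff.mpr (by rw [← Set.compl_setOf]; exact hPAc)
      have : μ1 ≤ 0 := integral_nonpos_of_ae hae
      linarith [hpos]
  -- μ2 > 0
  have hμ2nonneg : 0 ≤ μ2 := integral_nonneg fun p => sq_nonneg _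
  have hμ2pos : 0 < μ2 := by
    rcases lt_or_eq_of_le hμ2nonneg with h | h
    · exact h
    · exfalso
      have : (fun p => M p ^ 2) =ᵐ[P] 0 :=
        (integral_eq_zero_iff_of_nonneg (fun p => sq_nonneg _) hM2int).mp h.symm
      have hM0 : M =ᵐ[P] 0 := by
        filter_upwards [this] with p hp
        have : M p ^ 2 = 0 := hp
        exact pow_eq_zero_iff (by norm_num) |>.mp this
      have : μ1 = 0 := by
        rw [hμ1, integral_congr_ae hM0]; simp
      linarith [hpos]
  -- the key inequality: μ1 ≤ μ2/(2c) + c/2 * q  with c = μ1/q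
  set c : ℝ := μ1 / q with hc
  have hcpos : 0 < c := div_pos hpos hq0
  have hkey : μ1 ≤ μ2 / (2 * c) + c / 2 * q := by
    have hpt : ∀ p, M p ≤ M p ^ 2 / (2 * c) + Aᶜ.indicator (fun _ => c / 2) p := by
      intro p
      rcases le_or_gt (M p) 0 with h | h
      · have hpA : p ∈ A := h
        rw [Set.indicator_of_notMem (by simpa using hpA)]
        have : 0 ≤ M p ^ 2 / (2 * c) := div_nonneg (sq_nonneg _) (by linarith)
        linarith
      · have hpAc : p ∈ Aᶜ := by simpa [hA] using not_le.mpr h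
        rw [Set.indicator_of_mem hpAc]
        rw [div_add_div _ _ (by positivity) (by norm_num : (2:ℝ) ≠ 0),
          le_div_iff₀ (by positivity)]
        nlinarith [sq_nonneg (M p - c)]
    have hint1 : Integrable (fun p => M p ^ 2 / (2 * c)) P := hM2int.div_const _
    have hint2 : Integrable (Aᶜ.indicator (fun _ => c / 2)) P :=
      (integrable_const _).indicator hAm.compl
    calc μ1 ≤ ∫ p, (M p ^ 2 / (2 * c) + Aᶜ.indicator (fun _ => c / 2) p) ∂P := by
          apply integral_mono hMint (hint1.add hint2) hpt
      _ = μ2 / (2 * c) + c / 2 * q := by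
          rw [integral_add hint1 hint2, integral_div, integral_indicator hAm.compl]
          simp [hqdef, mul_comm]; rfl
  -- derive μ1^2 ≤ μ2 * q
  have hsq : μ1 ^ 2 ≤ μ2 * q := by
    have h1 : μ2 / (2 * c) = μ2 * q / (2 * μ1) := by
      rw [hc]; field_simp
    have h2 : c / 2 * q = μ1 / 2 := by
      rw [hc]; field_simp
    rw [h1, h2] at hkey
    have h3 : μ1 / 2 ≤ μ2 * q / (2 * μ1) := by linarith
    have h4 := (le_div_iff₀ (by linarith : (0:ℝ) < 2 * μ1)).mp h3
    nlinarith
  -- finish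
  have hgoal : r ≤ 1 - μ1 ^ 2 / μ2 := by
    rw [hqr] at hsq
    have : μ1 ^ 2 / μ2 ≤ 1 - r := (div_le_iff₀ hμ2pos).mpr (by nlinarith)
    linarith
  exact hgoal
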